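/- Let G and C be metric spaces with 0 < diam G < ∞, let λ ≥ 1 be real, and let R be a correspondence between G and C whose distortion satisfies dis R > diam G. Let R_λ denote R regarded as a correspondence between G and λ·C (the same subset of the product of underlying sets). Then dis R_λ ≥ dis R + ((λ − 1)/2)·diam G. -/

import Mathlib

open Metric

/-- Type synonym for a metric space with distances scaled by `lam`. -/
def Scaled (lam : ℝ) (X : Type*) : Type _ := X

/-- The canonical map from `Scaled lam X` back to `X`. -/
def Scaled.unscale {lam : ℝ} {X : Type*} (x : Scaled lam X) : X := x

/-- The canonical map from `X` to `Scaled lam X`. -/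
def Scaled.mk (lam : ℝ) {X : Type*} (x : X) : Scaled lam X := x

/-- The metric on `Scaled lam X`: the metric of `X` multiplied by `lam`. -/
noncomputable instance Scaled.metricSpace (lam : ℝ) (X : Type*) [MetricSpace X]
    [hl : Fact (0 < lam)] : MetricSpace (Scaled lam X) where
  dist x y := lam * dist x.unscale y.unscale
  dist_self x := by simp
  dist_comm x y := by simp [dist_comm]
  dist_triangle x y z := by
    show lam * dist x.unscale z.unscale ≤
      lam * dist x.unscale y.unscale + lam * dist y.unscale z.unscale
    rw [← mul_add]
    exact mul_le_mul_of_nonneg_left (dist_triangle _ _ _) hl.out.le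
  eq_of_dist_eq_zero {x y} h := by
    have h' : lam * dist x.unscale y.unscale = 0 := h
    have : dist x.unscale y.unscale = 0 := by
      rcases mul_eq_zero.mp h' with h'' | h''
      · exact absurd h'' hl.out.ne'
      · exact h''
    exact (eq_of_dist_eq_zero this : x.unscale = y.unscale)

theorem Scaled.dist_eq {lam : ℝ} {X : Type*} [MetricSpace X] [Fact (0 < lam)]
    (x y : Scaled lam X) : dist x y = lam * dist x.unscale y.unscale := rfl

theorem Scaled.continuous_unscale {lam : ℝ} {X : Type*} [MetricSpace X] [hl : Fact (0 < lam)] :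
    Continuous (Scaled.unscale : Scaled lam X → X) := by
  have hl0 := hl.out
  rw [Metric.continuous_iff]
  intro b ε hε
  refine ⟨lam * ε, by positivity, fun a ha => ?_⟩
  rw [Scaled.dist_eq] at ha
  exact lt_of_mul_lt_mul_left (by simpa using ha) hl0.le

theorem Scaled.continuous_mk {lam : ℝ} {X : Type*} [MetricSpace X] [hl : Fact (0 < lam)] :
    Continuous (Scaled.mk lam : X → Scaled lam X) := by
  have hl0 := hl.out
  have hne : lam ≠ 0 := hl0.ne'
  rw [Metric.continuous_iff]
  intro b ε hε
  refine ⟨ε / lam, by positivity, fun a ha => ?_⟩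
  rw [show dist (Scaled.mk lam a) (Scaled.mk lam b) = lam * dist a b from rfl]
  calc lam * dist a b < lam * (ε / lam) := mul_lt_mul_of_pos_left ha hl0
    _ = ε := by field_simp

/-- The identity as a homeomorphism between `X` and `Scaled lam X`. -/
noncomputable def Scaled.homeo (lam : ℝ) (X : Type*) [MetricSpace X] [Fact (0 < lam)] :
    X ≃ₜ Scaled lam X where
  toFun := Scaled.mk lam
  invFun := Scaled.unscale
  left_inv _ := rfl
  right_inv _ := rfl
  continuous_toFun := Scaled.continuous_mk
  continuous_invFun := Scaled.continuous_unscale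

instance {lam : ℝ} {X : Type*} [MetricSpace X] [Fact (0 < lam)] [CompactSpace X] :
    CompactSpace (Scaled lam X) :=
  (Scaled.homeo lam X).compactSpace

instance {lam : ℝ} {X : Type*} [Nonempty X] : Nonempty (Scaled lam X) := ‹Nonempty X›

open scoped ENNReal

/-- A correspondence between `X` and `Y`: a relation such that both projections are
surjective on it. -/
def IsCorrespondence {X Y : Type*} (R : Set (X × Y)) : Prop :=
  (∀ x : X, ∃ y : Y, (x, y) ∈ R) ∧ ∀ y : Y, ∃ x : X, (x, y) ∈ R

/-- The distortion of a relation between two metric spaces, with values in `[0,∞]`. -/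
noncomputable def relDis {X Y : Type*} [MetricSpace X] [MetricSpace Y]
    (σ : Set (X × Y)) : ℝ≥0∞ :=
  ⨆ (p ∈ σ) (q ∈ σ), ENNReal.ofReal |dist (Prod.fst p) (Prod.fst q) -
    dist (Prod.snd p) (Prod.snd q)|

/-- `s(M)`: the infimum of distances between distinct points of `M`. -/
noncomputable def sSpec (M : Type*) [MetricSpace M] : ℝ≥0∞ :=
  ⨅ (x : M) (y : M) (_ : x ≠ y), edist x y

/-- The distortion of a self-map of a metric space, with values in `[0,∞]`. -/
noncomputable def mapDis {M : Type*} [MetricSpace M] (f : M → M) : ℝ≥0∞ :=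
  ⨆ (x : M) (y : M), ENNReal.ofReal |dist x y - dist (f x) (f y)|

/-- `e(M)`: the infimum of distortions of non-identity bijections of `M`. -/
noncomputable def eSpec (M : Type*) [MetricSpace M] : ℝ≥0∞ :=
  ⨅ (f : M ≃ M) (_ : f ≠ Equiv.refl M), mapDis (f : M → M)

/-- `t(M)`: the infimum of the triangle inequality defects over triples of pairwise
distinct points of `M`. -/
noncomputable def tSpec (M : Type*) [MetricSpace M] : ℝ≥0∞ :=
  ⨅ (x : M) (y : M) (z : M) (_ : x ≠ y) (_ : y ≠ z) (_ : x ≠ z),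
    ENNReal.ofReal (dist x y + dist y z - dist x z)

/-- Auxiliary: each pair in `R` gives a lower bound on the scaled distortion. -/
theorem scaled_pair_le_relDis {G C : Type} [MetricSpace G] [MetricSpace C]
    (lam : ℝ) [Fact (0 < lam)] (R : Set (G × C)) (p q : G × C)
    (hp : p ∈ R) (hq : q ∈ R) :
    ENNReal.ofReal |dist p.1 q.1 - lam * dist p.2 q.2| ≤
      relDis (X := G) (Y := Scaled lam C) R := by
  unfold relDis
  refine le_iSup_of_le p (le_iSup_of_le hp (le_iSup_of_le q (le_iSup_of_le hq ?_)))
  rw [Scaled.dist_eq]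
  exact le_rfl

/-- Let `G`, `C` be metric spaces, `0 < diam G < ∞`, `λ ≥ 1`, and let `R`
be a correspondence between `G` and `C` with `dis R > diam G`.  Regarding `R` as a
correspondence `R_λ` between `G` and `λ·C`, one has
`dis R_λ ≥ dis R + ((λ−1)/2)·diam G`. -/
theorem relDis_scaled_ge {G C : Type} [MetricSpace G] [MetricSpace C]
    (hpos : 0 < Metric.diam (Set.univ : Set G))
    (hfin : EMetric.diam (Set.univ : Set G) ≠ ⊤)
    (lam : ℝ) [Fact (0 < lam)] (hlam : 1 ≤ lam)
    (R : Set (G × C)) (hR : IsCorrespondence R)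
    (hdis : ENNReal.ofReal (Metric.diam (Set.univ : Set G)) < relDis R) :
    relDis R + ENNReal.ofReal ((lam - 1) / 2 * Metric.diam (Set.univ : Set G)) ≤
      relDis (X := G) (Y := Scaled lam C) R := by
  set D := Metric.diam (Set.univ : Set G) with hD
  set c := ENNReal.ofReal ((lam - 1) / 2 * D) with hc
  set S := relDis (X := G) (Y := Scaled lam C) R with hS
  have hD0 : 0 ≤ D := Metric.diam_nonneg
  have hlam0 : 0 ≤ (lam - 1) / 2 * D := by
    have : 0 ≤ lam - 1 := by linarith
    positivity
  have hbdd : Bornology.IsBounded (Set.univ : Set G) :=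
    Metric.isBounded_iff_ediam_ne_top.mpr hfin
  have hdle : ∀ x y : G, dist x y ≤ D := fun x y =>
    Metric.dist_le_diam_of_mem hbdd (Set.mem_univ x) (Set.mem_univ y)
  have hcne : c ≠ ⊤ := ENNReal.ofReal_ne_top
  -- Lemma A: the big pair
  obtain ⟨p0, hp0, q0, hq0, hbig⟩ :
      ∃ p0, p0 ∈ R ∧ ∃ q0, q0 ∈ R ∧
        D < |dist p0.1 q0.1 - dist p0.2 q0.2| := by
    rw [relDis] at hdis
    simp only [lt_iSup_iff] at hdis
    obtain ⟨p0, hp0, q0, hq0, h⟩ := hdis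
    exact ⟨p0, hp0, q0, hq0, by
      have := (ENNReal.ofReal_lt_ofReal_iff_of_nonneg hD0).mp h
      exact this⟩
  have hDcS : ENNReal.ofReal D + c ≤ S := by
    set a0 := dist p0.1 q0.1
    set b0 := dist p0.2 q0.2
    have ha0D : a0 ≤ D := hdle _ _
    have ha00 : 0 ≤ a0 := dist_nonneg
    have hb00 : 0 ≤ b0 := dist_nonneg
    have habs : |a0 - b0| = b0 - a0 := by
      rcases abs_cases (a0 - b0) with ⟨h1, h2⟩ | ⟨h1, h2⟩
      · exfalso; rw [h1] at hbig; linarith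
      · rw [h1]; ring
    have hb0 : D < b0 - a0 := habs ▸ hbig
    have hkey : D + (lam - 1) / 2 * D ≤ |a0 - lam * b0| := by
      have h1 : lam * b0 - a0 ≤ |a0 - lam * b0| := by
        rw [abs_sub_comm]; exact le_abs_self _
      nlinarith [hb0, hlam, hD0, ha00]
    calc ENNReal.ofReal D + c = ENNReal.ofReal (D + (lam - 1) / 2 * D) := by
          rw [ENNReal.ofReal_add hD0 hlam0]
      _ ≤ ENNReal.ofReal |a0 - lam * b0| := ENNReal.ofReal_le_ofReal hkey
      _ ≤ S := scaled_pair_le_relDis lam R p0 q0 hp0 hq0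
  have hcS : c ≤ S := le_trans le_add_self hDcS
  -- pointwise bound
  have hpt : ∀ p ∈ R, ∀ q ∈ R,
      ENNReal.ofReal |dist p.1 q.1 - dist p.2 q.2| + c ≤ S := by
    intro p hp q hq
    set a := dist p.1 q.1
    set b := dist p.2 q.2
    have haD : a ≤ D := hdle _ _
    have ha0 : 0 ≤ a := dist_nonneg
    have hb0 : 0 ≤ b := dist_nonneg
    by_cases h1 : a ≤ b ∧ D / 2 ≤ b
    · obtain ⟨hab, hbD⟩ := h1
      have hkey : |a - b| + (lam - 1) / 2 * D ≤ |a - lam * b| := by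
        have h2 : lam * b - a ≤ |a - lam * b| := by
          rw [abs_sub_comm]; exact le_abs_self _
        have h3 : |a - b| = b - a := by rw [abs_sub_comm]; exact abs_of_nonneg (by linarith)
        nlinarith [hlam]
      calc ENNReal.ofReal |a - b| + c
          = ENNReal.ofReal (|a - b| + (lam - 1) / 2 * D) := by
            rw [ENNReal.ofReal_add (abs_nonneg _) hlam0]
        _ ≤ ENNReal.ofReal |a - lam * b| := ENNReal.ofReal_le_ofReal hkey
        _ ≤ S := scaled_pair_le_relDis lam R p q hp hq
    · push_neg at h1
      have htD : |a - b| ≤ D := by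
        rcases le_or_gt a b with hab | hab
        · have := h1 hab
          rw [abs_sub_comm, abs_of_nonneg (by linarith)]
          linarith
        · rw [abs_of_nonneg (by linarith)]
          linarith
      calc ENNReal.ofReal |a - b| + c ≤ ENNReal.ofReal D + c := by
            exact add_le_add_left (ENNReal.ofReal_le_ofReal htD) c
        _ ≤ S := hDcS
  have hmain : relDis R ≤ S - c := by
    rw [relDis]
    refine iSup_le fun p => iSup_le fun hp => iSup_le fun q => iSup_le fun hq => ?_
    exact ENNReal.le_sub_of_add_le_right hcne (hpt p hp q hq)
  calc relDis R + c ≤ (S - c) + c := add_le_add_left hmain c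
    _ = S := tsub_add_cancel_of_le hcS
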